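/- For every real ν ≥ 2 there exists a constant C(ν) > 0, depending only on ν, such that for all probability measures G and Ĝ on (0,∞), every t > 0, and every a > 0: ∫_{|x| > a} | ∫ φ(x; σ²)·g_ν(t; σ²) dG(σ²) − ∫ φ(x; σ²)·g_ν(t; σ²) dĜ(σ²) | dx ≤ (C(ν)/a) · ( ∫_0^∞ (f_G(w; ν+1) − f_Ĝ(w; ν+1))² dw )^{1/2}, where the inequality is understood in [0, ∞]. -/

import Mathlib

open MeasureTheory Real
open scoped ENNReal

/-- `g_ν(t; σ²)`: the density of `(σ²/ν)·χ²_ν`, i.e. the Gamma(ν/2, rate ν/(2σ²)) density. -/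
noncomputable def gdens (ν σ2 t : ℝ) : ℝ :=
  (1 / Real.Gamma (ν / 2)) * (ν / (2 * σ2)) ^ (ν / 2) * t ^ (ν / 2 - 1) *
    Real.exp (-(ν * t) / (2 * σ2))

/-- `φ(x; σ²) = (2πσ²)^{−1/2}·exp(−x²/(2σ²))`: the `N(0, σ²)` density. -/
noncomputable def phidens (x σ2 : ℝ) : ℝ :=
  (2 * Real.pi * σ2) ^ (-(1 / 2) : ℝ) * Real.exp (-(x ^ 2) / (2 * σ2))

/-- `f_G(t; ν) = ∫ g_ν(t; σ²) dG(σ²)`: the marginal density of `S²`. -/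
noncomputable def fGdens (G : Measure ℝ) (ν t : ℝ) : ℝ :=
  ∫ σ2, gdens ν σ2 t ∂G

noncomputable def Kc (ν : ℝ) : ℝ :=
  (2 * Real.pi) ^ (-(1 / 2) : ℝ) * (ν / 2) ^ (ν / 2) * Real.Gamma ((ν + 1) / 2) /
    (Real.Gamma (ν / 2) * ((ν + 1) / 2) ^ ((ν + 1) / 2))

lemma Kc_pos {ν : ℝ} (hν : 2 ≤ ν) : 0 < Kc ν := by
  have h1 : (0:ℝ) < ν := by linarith
  apply div_pos
  · apply mul_pos (mul_pos _ _)
    · exact Real.Gamma_pos_of_pos (by linarith)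
    · exact Real.rpow_pos_of_pos (by positivity) _
    · exact Real.rpow_pos_of_pos (by positivity) _
  · exact mul_pos (Real.Gamma_pos_of_pos (by linarith)) (Real.rpow_pos_of_pos (by positivity) _)

lemma key_identity {ν : ℝ} (hν : 2 ≤ ν) {σ2 t : ℝ} (x : ℝ) (hσ : 0 < σ2) (ht : 0 < t) :
    phidens x σ2 * gdens ν σ2 t
      = (Kc ν * t ^ (ν / 2 - 1) * ((ν * t + x ^ 2) / (ν + 1)) ^ (-(ν - 1) / 2)) *
          gdens (ν + 1) σ2 ((ν * t + x ^ 2) / (ν + 1)) := by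
  have hν0 : (0:ℝ) < ν := by linarith
  have hν1 : (0:ℝ) < ν + 1 := by linarith
  have hw : 0 < (ν * t + x ^ 2) / (ν + 1) := by positivity
  set w : ℝ := (ν * t + x ^ 2) / (ν + 1) with hw_def
  have hΓ1 : Real.Gamma (ν / 2) ≠ 0 := (Real.Gamma_pos_of_pos (by linarith)).ne'
  have hΓ2 : Real.Gamma ((ν + 1) / 2) ≠ 0 := (Real.Gamma_pos_of_pos (by linarith)).ne'
  -- expand rpow of products
  have e1 : (2 * Real.pi * σ2) ^ (-(1 / 2) : ℝ)
      = (2 * Real.pi) ^ (-(1 / 2) : ℝ) * σ2 ^ (-(1 / 2) : ℝ) :=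
    Real.mul_rpow (by positivity) hσ.le
  have e2 : (ν / (2 * σ2)) ^ (ν / 2) = (ν / 2) ^ (ν / 2) * σ2 ^ (-(ν / 2)) := by
    rw [show ν / (2 * σ2) = (ν / 2) * σ2⁻¹ by field_simp,
      Real.mul_rpow (by positivity) (by positivity), ← Real.rpow_neg_one σ2,
      ← Real.rpow_mul hσ.le]
    norm_num
  have e3 : ((ν + 1) / (2 * σ2)) ^ ((ν + 1) / 2)
      = ((ν + 1) / 2) ^ ((ν + 1) / 2) * σ2 ^ (-((ν + 1) / 2)) := by
    rw [show (ν + 1) / (2 * σ2) = ((ν + 1) / 2) * σ2⁻¹ by field_simp,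
      Real.mul_rpow (by positivity) (by positivity), ← Real.rpow_neg_one σ2,
      ← Real.rpow_mul hσ.le]
    norm_num
  have e4 : σ2 ^ (-(1 / 2) : ℝ) * σ2 ^ (-(ν / 2)) = σ2 ^ (-((ν + 1) / 2)) := by
    rw [← Real.rpow_add hσ]; ring_nf
  have e5 : w ^ (-(ν - 1) / 2) * w ^ ((ν + 1) / 2 - 1) = 1 := by
    rw [← Real.rpow_add hw]
    rw [show -(ν - 1) / 2 + ((ν + 1) / 2 - 1) = 0 by ring, Real.rpow_zero]
  have e6 : Real.exp (-(x ^ 2) / (2 * σ2)) * Real.exp (-(ν * t) / (2 * σ2))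
      = Real.exp (-((ν + 1) * w) / (2 * σ2)) := by
    rw [← Real.exp_add]
    congr 1
    rw [hw_def]
    field_simp
    ring
  unfold phidens gdens Kc
  rw [e1, e2, e3, ← e4, ← e6]
  field_simp
  ring_nf
  have hb : (0:ℝ) < x ^ 2 * (1 + ν)⁻¹ + ν * t * (1 + ν)⁻¹ := by positivity
  rw [← Real.rpow_add hw,
    show (1/2 + ν * (-1/2)) + (-1/2 + ν * (1/2)) = (0:ℝ) by ring, Real.rpow_zero]

section Aux

variable {F : Type*}

/-- 1D change of variables for lower integrals. -/
lemma lintegral_image_1d {s : Set ℝ} (hs : MeasurableSet s) {f f' : ℝ → ℝ}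
    (hf' : ∀ x ∈ s, HasDerivWithinAt f (f' x) s x) (hinj : Set.InjOn f s) (g : ℝ → ℝ≥0∞) :
    ∫⁻ x in f '' s, g x = ∫⁻ x in s, ENNReal.ofReal |f' x| * g (f x) := by
  simpa only [ContinuousLinearMap.det_toSpanSingleton] using
    MeasureTheory.lintegral_image_eq_lintegral_abs_det_fderiv_mul MeasureTheory.volume hs
      (fun x hx => (hf' x hx).hasFDerivWithinAt) hinj g

lemma refl_lintegral (a : ℝ) (f : ℝ → ℝ≥0∞) :
    ∫⁻ x in Set.Iio (-a), f x = ∫⁻ x in Set.Ioi a, f (-x) := by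
  have h := lintegral_image_1d (measurableSet_Ioi (a := a)) (f := fun x => -x)
    (f' := fun _ => -1) (fun x _ => (hasDerivAt_neg x).hasDerivWithinAt)
    (fun x _ y _ h => neg_injective h) f
  rw [Set.image_neg_Ioi] at h
  simpa using h

lemma measurable_gdens (ν : ℝ) : Measurable fun p : ℝ × ℝ => gdens ν p.2 p.1 := by
  unfold gdens
  exact (((measurable_const.div
      (measurable_const.mul measurable_snd)).pow measurable_const).const_mul _|>.mul
    (measurable_fst.pow measurable_const)).mul
    (((measurable_const.mul measurable_fst).neg.div
      (measurable_const.mul measurable_snd)).exp)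

lemma measurable_fG (G : MeasureTheory.Measure ℝ) [MeasureTheory.SFinite G] (ν : ℝ) :
    Measurable fun w => fGdens G ν w := by
  unfold fGdens
  exact (MeasureTheory.StronglyMeasurable.integral_prod_right' (ν := G)
    ((measurable_gdens ν).stronglyMeasurable)).measurable

lemma cov_bound {ν t a : ℝ} (hν : 2 ≤ ν) (ht : 0 < t) (ha : 0 < a) (g : ℝ → ℝ≥0∞)
    (hg : Measurable g) :
    ∫⁻ x in Set.Ioi a, g ((ν * t + x ^ 2) / (ν + 1))
      ≤ ENNReal.ofReal ((ν + 1) / (2 * a)) * ∫⁻ w in Set.Ioi 0, g w := by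
  have hν1 : (0:ℝ) < ν + 1 := by linarith
  set W : ℝ → ℝ := fun x => (ν * t + x ^ 2) / (ν + 1) with hW
  have hWmeas : Measurable W := ((measurable_id.pow_const 2).const_add _).div_const _
  have hderiv : ∀ x ∈ Set.Ioi a, HasDerivWithinAt W (2 * x / (ν + 1)) (Set.Ioi a) x := by
    intro x _
    have : HasDerivAt (fun x : ℝ => (ν * t + x ^ 2) / (ν + 1)) (2 * x / (ν + 1)) x := by
      simpa using (((hasDerivAt_pow 2 x).const_add (ν * t)).div_const (ν + 1))
    exact this.hasDerivWithinAt
  have hinj : Set.InjOn W (Set.Ioi a) := by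
    intro x hx y hy h
    simp only [Set.mem_Ioi] at hx hy
    have hsq : x ^ 2 = y ^ 2 := by
      simp only [hW] at h
      rw [div_left_inj' hν1.ne'] at h
      linarith
    have : (x - y) * (x + y) = 0 := by linear_combination hsq
    rcases mul_eq_zero.1 this with h' | h'
    · linarith
    · linarith
  calc ∫⁻ x in Set.Ioi a, g (W x)
      ≤ ∫⁻ x in Set.Ioi a,
          ENNReal.ofReal ((ν + 1) / (2 * a)) * (ENNReal.ofReal |2 * x / (ν + 1)| * g (W x)) := by
        apply MeasureTheory.setLIntegral_mono
          ((((measurable_id.const_mul 2).div_const _).abs.ennreal_ofReal.mul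
            (hg.comp hWmeas)).const_mul _)
        intro x hx
        simp only [Pi.mul_apply, Function.comp_apply]
        rw [← mul_assoc, ← ENNReal.ofReal_mul (by positivity)]
        nth_rw 1 [← one_mul (g (W x))]
        apply mul_le_mul_left
        apply ENNReal.one_le_ofReal.2
        have hx0 : 0 < x := lt_trans ha hx
        simp only [id_eq]
        rw [abs_of_pos (by positivity)]
        have : (ν + 1) / (2 * a) * (2 * x / (ν + 1)) = x / a := by
          field_simp
        rw [this]
        rw [le_div_iff₀ ha]
        simpa using hx.le
    _ = ENNReal.ofReal ((ν + 1) / (2 * a)) *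
          ∫⁻ x in Set.Ioi a, ENNReal.ofReal |2 * x / (ν + 1)| * g (W x) :=
        MeasureTheory.lintegral_const_mul' _ _ ENNReal.ofReal_ne_top
    _ = ENNReal.ofReal ((ν + 1) / (2 * a)) * ∫⁻ w in W '' Set.Ioi a, g w := by
        rw [lintegral_image_1d measurableSet_Ioi hderiv hinj]
    _ ≤ ENNReal.ofReal ((ν + 1) / (2 * a)) * ∫⁻ w in Set.Ioi 0, g w := by
        apply mul_le_mul_right
        apply MeasureTheory.lintegral_mono_set
        rintro w ⟨x, -, rfl⟩
        show (0:ℝ) < (ν * t + x ^ 2) / (ν + 1)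
        positivity

lemma lintegral_inv_sq {a : ℝ} (ha : 0 < a) :
    ∫⁻ x in Set.Ioi a, ENNReal.ofReal ((x ^ 2)⁻¹) = ENNReal.ofReal a⁻¹ := by
  have h1 : ∫⁻ x in Set.Ioi a, ENNReal.ofReal ((x ^ 2)⁻¹)
      = ∫⁻ x in Set.Ioi a, ENNReal.ofReal (x ^ (-2 : ℝ)) := by
    apply MeasureTheory.setLIntegral_congr_fun measurableSet_Ioi
    intro x hx
    show ENNReal.ofReal ((x ^ 2)⁻¹) = ENNReal.ofReal (x ^ (-2 : ℝ))
    have hx0 : 0 < x := lt_trans ha hx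
    rw [Real.rpow_neg hx0.le, show (2:ℝ) = ((2:ℕ):ℝ) by norm_num, Real.rpow_natCast]
  rw [h1, ← MeasureTheory.ofReal_integral_eq_lintegral_ofReal
      (integrableOn_Ioi_rpow_of_lt (by norm_num) ha)]
  · rw [integral_Ioi_rpow_of_lt (by norm_num) ha]
    norm_num
    rw [Real.rpow_neg_one]
  · filter_upwards [MeasureTheory.ae_restrict_mem measurableSet_Ioi] with x hx
    have hx0 : 0 < x := lt_trans ha hx
    positivity

end Aux

lemma c_sq_bound {ν t : ℝ} (hν : 2 ≤ ν) (ht : 0 < t) {x : ℝ} (hx : x ≠ 0) :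
    (Kc ν * t ^ (ν / 2 - 1) * ((ν * t + x ^ 2) / (ν + 1)) ^ (-(ν - 1) / 2)) ^ 2
      ≤ ((Kc ν) ^ 2 * (ν / (ν + 1)) ^ (-(ν - 2)) * (ν + 1)) * (x ^ 2)⁻¹ := by
  have hν0 : (0:ℝ) < ν := by linarith
  have hν1 : (0:ℝ) < ν + 1 := by linarith
  have hx2 : (0:ℝ) < x ^ 2 := by positivity
  set w : ℝ := (ν * t + x ^ 2) / (ν + 1) with hw_def
  have hw : 0 < w := by positivity
  have h1 : (t ^ (ν / 2 - 1)) ^ 2 = t ^ (ν - 2) := by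
    rw [← Real.rpow_natCast (t ^ (ν / 2 - 1)) 2, ← Real.rpow_mul ht.le]
    norm_num
    ring_nf
  have h2 : (w ^ (-(ν - 1) / 2)) ^ 2 = w ^ (-(ν - 1)) := by
    rw [← Real.rpow_natCast (w ^ (-(ν - 1) / 2)) 2, ← Real.rpow_mul hw.le]
    norm_num
  have h3 : w ^ (-(ν - 1)) = w ^ (-(ν - 2)) * w ^ (-1 : ℝ) := by
    rw [← Real.rpow_add hw]
    ring_nf
  have hb1 : (0:ℝ) < ν * t / (ν + 1) := by positivity
  have hle1 : ν * t / (ν + 1) ≤ w := by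
    rw [hw_def]
    gcongr
    nlinarith [sq_nonneg x]
  have hbound1 : w ^ (-(ν - 2)) ≤ (ν * t / (ν + 1)) ^ (-(ν - 2)) :=
    Real.rpow_le_rpow_of_nonpos hb1 hle1 (by linarith)
  have hle2 : x ^ 2 / (ν + 1) ≤ w := by
    rw [hw_def]
    gcongr
    nlinarith
  have hbound2 : w ^ (-1 : ℝ) ≤ (ν + 1) * (x ^ 2)⁻¹ := by
    rw [Real.rpow_neg_one]
    calc w⁻¹ ≤ (x ^ 2 / (ν + 1))⁻¹ :=
          inv_anti₀ (by positivity : (0:ℝ) < x ^ 2 / (ν + 1)) hle2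
      _ = (ν + 1) * (x ^ 2)⁻¹ := by rw [inv_div, div_eq_mul_inv]
  have h4 : (ν * t / (ν + 1)) ^ (-(ν - 2)) = (ν / (ν + 1)) ^ (-(ν - 2)) * t ^ (-(ν - 2)) := by
    rw [show ν * t / (ν + 1) = ν / (ν + 1) * t by ring, Real.mul_rpow (by positivity) ht.le]
  have h5 : t ^ (ν - 2) * t ^ (-(ν - 2)) = 1 := by
    rw [← Real.rpow_add ht]
    simp
  calc (Kc ν * t ^ (ν / 2 - 1) * w ^ (-(ν - 1) / 2)) ^ 2
      = Kc ν ^ 2 * (t ^ (ν / 2 - 1)) ^ 2 * (w ^ (-(ν - 1) / 2)) ^ 2 := by ring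
    _ = Kc ν ^ 2 * t ^ (ν - 2) * (w ^ (-(ν - 2)) * w ^ (-1 : ℝ)) := by rw [h1, h2, h3]
    _ ≤ Kc ν ^ 2 * t ^ (ν - 2) *
          ((ν * t / (ν + 1)) ^ (-(ν - 2)) * ((ν + 1) * (x ^ 2)⁻¹)) := by
        apply mul_le_mul_of_nonneg_left
          (mul_le_mul hbound1 hbound2 (Real.rpow_nonneg hw.le _) (Real.rpow_nonneg hb1.le _))
        positivity
    _ = Kc ν ^ 2 * (ν / (ν + 1)) ^ (-(ν - 2)) * (ν + 1) * (x ^ 2)⁻¹ *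
          (t ^ (ν - 2) * t ^ (-(ν - 2))) := by rw [h4]; ring
    _ = Kc ν ^ 2 * (ν / (ν + 1)) ^ (-(ν - 2)) * (ν + 1) * (x ^ 2)⁻¹ := by rw [h5, mul_one]

open MeasureTheory in
lemma piece_bound {ν : ℝ} (hν : 2 ≤ ν) (G G' : Measure ℝ) [IsProbabilityMeasure G]
    [IsProbabilityMeasure G'] (hG : ∀ᵐ σ2 ∂G, 0 < σ2) (hG' : ∀ᵐ σ2 ∂G', 0 < σ2)
    {t a : ℝ} (ht : 0 < t) (ha : 0 < a) :
    (∫⁻ x in Set.Ioi a, ENNReal.ofReal |(∫ σ2, phidens x σ2 * gdens ν σ2 t ∂G) -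
        (∫ σ2, phidens x σ2 * gdens ν σ2 t ∂G')|)
      ≤ ENNReal.ofReal
          (Real.sqrt ((Kc ν ^ 2 * (ν / (ν + 1)) ^ (-(ν - 2)) * (ν + 1)) * ((ν + 1) / 2)) / a) *
        (∫⁻ w in Set.Ioi 0,
            ENNReal.ofReal ((fGdens G (ν + 1) w - fGdens G' (ν + 1) w) ^ 2)) ^ (1 / 2 : ℝ) := by
  have hν0 : (0:ℝ) < ν := by linarith
  have hν1 : (0:ℝ) < ν + 1 := by linarith
  set D : ℝ := Kc ν ^ 2 * (ν / (ν + 1)) ^ (-(ν - 2)) * (ν + 1) with hD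
  have hD0 : 0 < D := by
    have h1 := Kc_pos hν
    have h2 : (0:ℝ) < (ν / (ν + 1)) ^ (-(ν - 2)) := Real.rpow_pos_of_pos (by positivity) _
    positivity
  set W : ℝ → ℝ := fun x => (ν * t + x ^ 2) / (ν + 1) with hW
  set c : ℝ → ℝ := fun x => Kc ν * t ^ (ν / 2 - 1) * (W x) ^ (-(ν - 1) / 2) with hc
  set Δ : ℝ → ℝ := fun w => fGdens G (ν + 1) w - fGdens G' (ν + 1) w with hΔ
  have hcpos : ∀ x, 0 < c x := by
    intro x
    have hw : 0 < W x := by simp only [hW]; positivity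
    exact mul_pos (mul_pos (Kc_pos hν) (Real.rpow_pos_of_pos ht _))
      (Real.rpow_pos_of_pos hw _)
  have hΔmeas : Measurable Δ := (measurable_fG G _).sub (measurable_fG G' _)
  have hWmeas : Measurable W := ((measurable_id.pow_const 2).const_add _).div_const _
  have hcmeas : Measurable c := (hWmeas.pow measurable_const).const_mul _
  have hjoint : ∀ (μ : Measure ℝ), IsProbabilityMeasure μ → (∀ᵐ σ2 ∂μ, 0 < σ2) → ∀ x,
      (∫ σ2, phidens x σ2 * gdens ν σ2 t ∂μ) = c x * fGdens μ (ν + 1) (W x) := by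
    intro μ _ hμ x
    rw [show (∫ σ2, phidens x σ2 * gdens ν σ2 t ∂μ)
        = ∫ σ2, c x * gdens (ν + 1) σ2 (W x) ∂μ from
      integral_congr_ae (hμ.mono fun σ2 hσ => key_identity hν x hσ ht)]
    exact integral_const_mul _ _
  have heq : ∀ x, ENNReal.ofReal |(∫ σ2, phidens x σ2 * gdens ν σ2 t ∂G) -
      (∫ σ2, phidens x σ2 * gdens ν σ2 t ∂G')|
      = ENNReal.ofReal (c x) * ENNReal.ofReal |Δ (W x)| := by
    intro x
    rw [hjoint G inferInstance hG x, hjoint G' inferInstance hG' x,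
      show c x * fGdens G (ν + 1) (W x) - c x * fGdens G' (ν + 1) (W x)
        = c x * Δ (W x) by simp only [hΔ]; ring,
      abs_mul, abs_of_pos (hcpos x), ENNReal.ofReal_mul (hcpos x).le]
  have hABound : (∫⁻ x in Set.Ioi a, ENNReal.ofReal (c x) ^ (2:ℝ))
      ≤ ENNReal.ofReal (D * a⁻¹) := by
    calc ∫⁻ x in Set.Ioi a, ENNReal.ofReal (c x) ^ (2:ℝ)
        = ∫⁻ x in Set.Ioi a, ENNReal.ofReal (c x ^ 2) := by
          apply lintegral_congr fun x => ?_
          rw [show (2:ℝ) = ((2:ℕ):ℝ) by norm_num, ENNReal.rpow_natCast,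
            ← ENNReal.ofReal_pow (hcpos x).le]
      _ ≤ ∫⁻ x in Set.Ioi a, ENNReal.ofReal (D * (x ^ 2)⁻¹) := by
          apply setLIntegral_mono (((measurable_id.pow_const 2).inv.const_mul D).ennreal_ofReal)
          intro x hx
          apply ENNReal.ofReal_le_ofReal
          simp only [hc, hW, hD, id_eq]
          exact c_sq_bound hν ht (lt_trans ha hx).ne'
      _ = ENNReal.ofReal D * ∫⁻ x in Set.Ioi a, ENNReal.ofReal ((x ^ 2)⁻¹) := by
          simp_rw [ENNReal.ofReal_mul hD0.le]
          exact lintegral_const_mul' _ _ ENNReal.ofReal_ne_top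
      _ = ENNReal.ofReal D * ENNReal.ofReal a⁻¹ := by rw [lintegral_inv_sq ha]
      _ = ENNReal.ofReal (D * a⁻¹) := (ENNReal.ofReal_mul hD0.le).symm
  have hBBound : (∫⁻ x in Set.Ioi a, ENNReal.ofReal |Δ (W x)| ^ (2:ℝ))
      ≤ ENNReal.ofReal ((ν + 1) / (2 * a)) *
        ∫⁻ w in Set.Ioi 0, ENNReal.ofReal (Δ w ^ 2) := by
    calc ∫⁻ x in Set.Ioi a, ENNReal.ofReal |Δ (W x)| ^ (2:ℝ)
        = ∫⁻ x in Set.Ioi a, (fun w => ENNReal.ofReal (Δ w ^ 2)) (W x) := by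
          apply lintegral_congr fun x => ?_
          rw [show (2:ℝ) = ((2:ℕ):ℝ) by norm_num, ENNReal.rpow_natCast,
            ← ENNReal.ofReal_pow (abs_nonneg _), sq_abs]
      _ ≤ _ := cov_bound hν ht ha _ ((hΔmeas.pow_const 2).ennreal_ofReal)
  calc (∫⁻ x in Set.Ioi a, ENNReal.ofReal |(∫ σ2, phidens x σ2 * gdens ν σ2 t ∂G) -
        (∫ σ2, phidens x σ2 * gdens ν σ2 t ∂G')|)
      = ∫⁻ x in Set.Ioi a, ENNReal.ofReal (c x) * ENNReal.ofReal |Δ (W x)| :=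
        lintegral_congr fun x => heq x
    _ ≤ (∫⁻ x in Set.Ioi a, ENNReal.ofReal (c x) ^ (2:ℝ)) ^ (1/2 : ℝ) *
        (∫⁻ x in Set.Ioi a, ENNReal.ofReal |Δ (W x)| ^ (2:ℝ)) ^ (1/2 : ℝ) := by
        have hpq : Real.HolderConjugate 2 2 := Real.HolderConjugate.two_two
        have h := ENNReal.lintegral_mul_le_Lp_mul_Lq (volume.restrict (Set.Ioi a)) hpq
          hcmeas.ennreal_ofReal.aemeasurable
          ((hΔmeas.comp hWmeas).abs.ennreal_ofReal.aemeasurable)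
        simpa using h
    _ ≤ (ENNReal.ofReal (D * a⁻¹)) ^ (1/2 : ℝ) *
        (ENNReal.ofReal ((ν + 1) / (2 * a)) *
          ∫⁻ w in Set.Ioi 0, ENNReal.ofReal (Δ w ^ 2)) ^ (1/2 : ℝ) :=
        mul_le_mul' (ENNReal.rpow_le_rpow hABound (by norm_num))
          (ENNReal.rpow_le_rpow hBBound (by norm_num))
    _ = ENNReal.ofReal (Real.sqrt (D * ((ν + 1) / 2)) / a) *
        (∫⁻ w in Set.Ioi 0, ENNReal.ofReal (Δ w ^ 2)) ^ (1/2 : ℝ) := by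
        rw [ENNReal.mul_rpow_of_nonneg _ _ (by norm_num : (0:ℝ) ≤ 1/2),
          ENNReal.ofReal_rpow_of_nonneg (by positivity) (by norm_num),
          ENNReal.ofReal_rpow_of_nonneg (by positivity) (by norm_num),
          ← mul_assoc, ← ENNReal.ofReal_mul (by positivity),
          ← Real.mul_rpow (by positivity) (by positivity),
          show D * a⁻¹ * ((ν + 1) / (2 * a)) = (D * ((ν + 1) / 2)) / a ^ 2 by
            field_simp,
          ← Real.sqrt_eq_rpow, Real.sqrt_div (by positivity), Real.sqrt_sq ha.le]

/-- tail `L¹` bound on the difference of joint null densities in terms of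
the `L²` distance of the marginals at degrees of freedom `ν + 1`, with a constant `C(ν)`
depending only on `ν ≥ 2`; the inequality is understood in `[0, ∞]`. -/
theorem stmt7 (ν : ℝ) (hν : 2 ≤ ν) :
    ∃ C : ℝ, 0 < C ∧
      ∀ (G G' : Measure ℝ), IsProbabilityMeasure G → IsProbabilityMeasure G' →
        (∀ᵐ σ2 ∂G, 0 < σ2) → (∀ᵐ σ2 ∂G', 0 < σ2) →
        ∀ t a : ℝ, 0 < t → 0 < a →
          (∫⁻ x in {x : ℝ | a < |x|},
              ENNReal.ofReal |(∫ σ2, phidens x σ2 * gdens ν σ2 t ∂G) -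
                (∫ σ2, phidens x σ2 * gdens ν σ2 t ∂G')|)
            ≤ ENNReal.ofReal (C / a) *
              (∫⁻ w in Set.Ioi (0 : ℝ),
                  ENNReal.ofReal ((fGdens G (ν + 1) w - fGdens G' (ν + 1) w) ^ 2)) ^
                (1 / 2 : ℝ) := by
  have hν0 : (0:ℝ) < ν := by linarith
  have hν1 : (0:ℝ) < ν + 1 := by linarith
  have hD0 : 0 < Kc ν ^ 2 * (ν / (ν + 1)) ^ (-(ν - 2)) * (ν + 1) := by
    have h1 := Kc_pos hν
    have h2 : (0:ℝ) < (ν / (ν + 1)) ^ (-(ν - 2)) := Real.rpow_pos_of_pos (by positivity) _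
    positivity
  set E : ℝ := Real.sqrt ((Kc ν ^ 2 * (ν / (ν + 1)) ^ (-(ν - 2)) * (ν + 1)) * ((ν + 1) / 2))
    with hE
  have hE0 : 0 < E := Real.sqrt_pos.2 (by positivity)
  refine ⟨2 * E, by positivity, ?_⟩
  intro G G' hPG hPG' hG hG' t a ht ha
  haveI := hPG; haveI := hPG'
  set F : ℝ → ℝ≥0∞ := fun x => ENNReal.ofReal |(∫ σ2, phidens x σ2 * gdens ν σ2 t ∂G) -
    (∫ σ2, phidens x σ2 * gdens ν σ2 t ∂G')| with hF
  have hset : {x : ℝ | a < |x|} = Set.Iio (-a) ∪ Set.Ioi a := by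
    ext x
    simp only [Set.mem_setOf_eq, Set.mem_union, Set.mem_Iio, Set.mem_Ioi]
    rcases le_or_gt 0 x with h | h
    · rw [abs_of_nonneg h]
      constructor
      · exact fun h' => Or.inr h'
      · rintro (h' | h') <;> linarith
    · rw [abs_of_neg h]
      constructor
      · intro h'; left; linarith
      · rintro (h' | h') <;> linarith
  have hdisj : Disjoint (Set.Iio (-a)) (Set.Ioi a) :=
    (Set.Iio_disjoint_Ici (by linarith)).mono_right Set.Ioi_subset_Ici_self
  have hrefl : (∫⁻ x in Set.Iio (-a), F x) = ∫⁻ x in Set.Ioi a, F x := by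
    rw [refl_lintegral]
    apply lintegral_congr fun x => ?_
    simp only [hF, phidens, neg_sq]
  have hpiece := piece_bound hν G G' hG hG' ht ha
  calc ∫⁻ x in {x : ℝ | a < |x|}, F x
      = (∫⁻ x in Set.Iio (-a), F x) + ∫⁻ x in Set.Ioi a, F x := by
        rw [hset, lintegral_union measurableSet_Ioi hdisj]
    _ = (∫⁻ x in Set.Ioi a, F x) + ∫⁻ x in Set.Ioi a, F x := by rw [hrefl]
    _ ≤ (ENNReal.ofReal (E / a) *
          (∫⁻ w in Set.Ioi 0,
            ENNReal.ofReal ((fGdens G (ν + 1) w - fGdens G' (ν + 1) w) ^ 2)) ^ (1 / 2 : ℝ)) +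
        ENNReal.ofReal (E / a) *
          (∫⁻ w in Set.Ioi 0,
            ENNReal.ofReal ((fGdens G (ν + 1) w - fGdens G' (ν + 1) w) ^ 2)) ^ (1 / 2 : ℝ) :=
        add_le_add hpiece hpiece
    _ = ENNReal.ofReal (2 * E / a) *
          (∫⁻ w in Set.Ioi 0,
            ENNReal.ofReal ((fGdens G (ν + 1) w - fGdens G' (ν + 1) w) ^ 2)) ^ (1 / 2 : ℝ) := by
        rw [← add_mul, ← ENNReal.ofReal_add (by positivity) (by positivity),
          show E / a + E / a = 2 * E / a by ring]
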